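/- If f : 2^U → ℝ is normalized, monotone, submodular, and has curvature at most c, then g(A) = ∑_{B ⊆ A} m_{|A|−1,|B|−1} f(B) also has curvature at most c, i.e., g(A + x) − g(A) ≥ (1−c)·g({x}) for all A and x ∉ A. -/

import Mathlib

open MeasureTheory Real Finset

noncomputable def mcoef (c : ℝ) (a b : ℤ) : ℝ :=
  if a < 0 ∨ b < 0 then 0
  else ∫ p in (0:ℝ)..1,
    (c * Real.exp (c * p) / (Real.exp c - 1)) * p ^ b.toNat * (1 - p) ^ (a - b).toNat

noncomputable def harm (k : ℕ) : ℝ := ∑ t ∈ Finset.range k, (1 : ℝ) / (t + 1)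

noncomputable def gfun (c : ℝ) {U : Type*} [DecidableEq U] (f : Finset U → ℝ)
    (A : Finset U) : ℝ :=
  ∑ B ∈ A.powerset, mcoef c ((A.card : ℤ) - 1) ((B.card : ℤ) - 1) * f B

/-- continuity of the integrand -/
lemma contInteg (c : ℝ) (i j : ℕ) :
    Continuous fun p : ℝ => (c * Real.exp (c * p) / (Real.exp c - 1)) * p ^ i * (1 - p) ^ j := by
  apply Continuous.mul
  apply Continuous.mul
  · exact (continuous_const.mul (Real.continuous_exp.comp (continuous_const.mul continuous_id))).div_const _
  · exact continuous_pow i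
  · exact ((continuous_const.sub continuous_id).pow j)

lemma intervalInteg (c : ℝ) (i j : ℕ) :
    IntervalIntegrable
      (fun p : ℝ => (c * Real.exp (c * p) / (Real.exp c - 1)) * p ^ i * (1 - p) ^ j)
      MeasureTheory.volume 0 1 :=
  (contInteg c i j).intervalIntegrable 0 1

/-- mcoef at natural indices -/
lemma mcoef_coe (c : ℝ) (a b : ℕ) :
    mcoef c a b = ∫ p in (0:ℝ)..1,
      (c * Real.exp (c * p) / (Real.exp c - 1)) * p ^ b * (1 - p) ^ (a - b) := by
  unfold mcoef
  rw [if_neg (by push_neg; exact ⟨Int.natCast_nonneg _, Int.natCast_nonneg _⟩)]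
  norm_num [Int.toNat_sub]

lemma exp_c_sub_one_pos (c : ℝ) (hc0 : 0 < c) : 0 < Real.exp c - 1 := by
  have : (1:ℝ) < Real.exp c := by
    simpa using Real.exp_lt_exp.mpr hc0
  linarith

lemma mcoef_nonneg (c : ℝ) (hc0 : 0 < c) (a b : ℤ) : 0 ≤ mcoef c a b := by
  unfold mcoef
  split
  · exact le_rfl
  · apply intervalIntegral.integral_nonneg (by norm_num)
    intro p hp
    have hE := exp_c_sub_one_pos c hc0
    have h1 : 0 ≤ c * Real.exp (c * p) / (Real.exp c - 1) :=
      div_nonneg (mul_nonneg hc0.le (Real.exp_pos _).le) hE.le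
    have h2 : (0:ℝ) ≤ 1 - p := by linarith [hp.2]
    exact mul_nonneg (mul_nonneg h1 (pow_nonneg hp.1 _)) (pow_nonneg h2 _)

/-- the weight integrates to 1 -/
lemma int_w (c : ℝ) (hc0 : 0 < c) :
    (∫ p in (0:ℝ)..1, c * Real.exp (c * p) / (Real.exp c - 1)) = 1 := by
  have hE := exp_c_sub_one_pos c hc0
  have hderiv : ∀ p ∈ Set.uIcc (0:ℝ) 1,
      HasDerivAt (fun q => Real.exp (c * q) / c) (Real.exp (c * p)) p := by
    intro p _
    have h1 : HasDerivAt (fun q : ℝ => c * q) (c * 1) p := (hasDerivAt_id p).const_mul c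
    have h2 := (h1.exp).div_const c
    exact h2.congr_deriv (by rw [mul_one, mul_div_assoc, div_self hc0.ne', mul_one])
  have hint : IntervalIntegrable (fun p => Real.exp (c * p)) MeasureTheory.volume 0 1 :=
    (Real.continuous_exp.comp (continuous_const.mul continuous_id)).intervalIntegrable 0 1
  have key := intervalIntegral.integral_eq_sub_of_hasDerivAt hderiv hint
  have : (∫ p in (0:ℝ)..1, c * Real.exp (c * p) / (Real.exp c - 1))
      = (c / (Real.exp c - 1)) * ∫ p in (0:ℝ)..1, Real.exp (c * p) := by
    rw [← intervalIntegral.integral_const_mul]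
    congr 1; funext p; ring
  rw [this, key]
  field_simp
  simp

/-- sum over powerset of coefficients equals 1 -/
lemma sum_one {U : Type*} [DecidableEq U] (c : ℝ) (hc0 : 0 < c) (A : Finset U) :
    ∑ B ∈ A.powerset, mcoef c A.card B.card = 1 := by
  have step1 : ∑ B ∈ A.powerset, mcoef c A.card B.card
      = ∫ p in (0:ℝ)..1, ∑ B ∈ A.powerset,
          (c * Real.exp (c * p) / (Real.exp c - 1)) * p ^ B.card * (1 - p) ^ (A.card - B.card) := by
    rw [intervalIntegral.integral_finset_sum
      (f := fun (B : Finset U) (p : ℝ) =>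
        (c * Real.exp (c * p) / (Real.exp c - 1)) * p ^ B.card * (1 - p) ^ (A.card - B.card))
      (fun B _ => intervalInteg c B.card (A.card - B.card))]
    exact Finset.sum_congr rfl fun B _ => mcoef_coe c A.card B.card
  rw [step1]
  have key : ∀ p : ℝ, ∑ B ∈ A.powerset, p ^ B.card * (1 - p) ^ (A.card - B.card) = 1 := by
    intro p
    have h := Finset.prod_add (fun _ : U => p) (fun _ : U => 1 - p) A
    simp only [Finset.prod_const] at h
    calc ∑ B ∈ A.powerset, p ^ B.card * (1 - p) ^ (A.card - B.card)
        = ∑ B ∈ A.powerset, p ^ B.card * (1 - p) ^ (A \ B).card := by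
          refine Finset.sum_congr rfl fun B hB => ?_
          rw [Finset.card_sdiff_of_subset (Finset.mem_powerset.mp hB)]
      _ = (p + (1 - p)) ^ A.card := h.symm
      _ = 1 := by norm_num
  have hfun : (fun p : ℝ => ∑ B ∈ A.powerset,
          (c * Real.exp (c * p) / (Real.exp c - 1)) * p ^ B.card * (1 - p) ^ (A.card - B.card))
      = fun p : ℝ => c * Real.exp (c * p) / (Real.exp c - 1) := by
    funext p
    calc ∑ B ∈ A.powerset,
          (c * Real.exp (c * p) / (Real.exp c - 1)) * p ^ B.card * (1 - p) ^ (A.card - B.card)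
        = (c * Real.exp (c * p) / (Real.exp c - 1)) *
            ∑ B ∈ A.powerset, p ^ B.card * (1 - p) ^ (A.card - B.card) := by
          rw [Finset.mul_sum]; exact Finset.sum_congr rfl fun B _ => by ring
      _ = _ := by rw [key p]; ring
  rw [intervalIntegral.integral_congr (fun p _ => congrFun hfun p), int_w c hc0]

/-- recurrence -/
lemma mrec (c : ℝ) (a k : ℕ) (hk1 : 1 ≤ k) (hka : k ≤ a) :
    mcoef c a ((k : ℤ) - 1) - mcoef c ((a : ℤ) - 1) ((k : ℤ) - 1) = -mcoef c a k := by
  obtain ⟨i, rfl⟩ : ∃ i, k = i + 1 := ⟨k - 1, by omega⟩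
  obtain ⟨j, rfl⟩ : ∃ j, a = i + 1 + j := ⟨a - (i + 1), by omega⟩
  have e1 : ((i : ℤ) + 1) - 1 = ((i : ℕ) : ℤ) := by ring
  have e2 : ((i + 1 + j : ℕ) : ℤ) - 1 = ((i + j : ℕ) : ℤ) := by push_cast; ring
  push_cast [e1]
  rw [show ((i:ℤ) + 1 + (j:ℤ) - 1) = ((i + j : ℕ) : ℤ) by push_cast; ring]
  rw [show ((i:ℤ) + 1 + (j:ℤ)) = ((i + 1 + j : ℕ) : ℤ) by push_cast; ring]
  rw [show ((i:ℤ) + 1) = ((i + 1 : ℕ) : ℤ) by push_cast; ring]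
  rw [mcoef_coe, mcoef_coe, mcoef_coe]
  have s1 : i + 1 + j - i = j + 1 := by omega
  have s2 : i + j - i = j := by omega
  have s3 : i + 1 + j - (i + 1) = j := by omega
  rw [s1, s2, s3]
  rw [← intervalIntegral.integral_sub (intervalInteg c i (j+1)) (intervalInteg c i j),
      ← intervalIntegral.integral_neg]
  congr 1; funext p; ring

theorem stmt_8 (c : ℝ) (hc0 : 0 < c) (hc1 : c ≤ 1) {U : Type*} [Fintype U] [DecidableEq U]
    (f : Finset U → ℝ)
    (hnorm : f ∅ = 0)
    (hmono : ∀ A B : Finset U, A ⊆ B → f A ≤ f B)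
    (hsub : ∀ A B : Finset U, f A + f B ≥ f (A ∪ B) + f (A ∩ B))
    (hcurv : ∀ (A : Finset U) (x : U), x ∉ A →
      f (insert x A) - f A ≥ (1 - c) * f {x}) :
    ∀ (A : Finset U) (x : U), x ∉ A →
      gfun c f (insert x A) - gfun c f A ≥ (1 - c) * gfun c f {x} := by
  have h00 : mcoef c 0 0 = 1 := by
    have := sum_one (U := U) c hc0 ∅
    simpa using this
  intro A x hx
  -- g {x} = f {x}
  have hgx : gfun c f {x} = f {x} := by
    unfold gfun
    have hps : ({x} : Finset U).powerset = {∅, {x}} := by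
      ext B
      simp [Finset.subset_singleton_iff]
    rw [hps, Finset.sum_pair ((Finset.singleton_ne_empty x).symm)]
    simp [hnorm, h00]
  -- expand g (insert x A)
  have hcardins : ∀ B ∈ A.powerset, (insert x B).card = B.card + 1 := by
    intro B hB
    exact Finset.card_insert_of_notMem fun h => hx (Finset.mem_powerset.mp hB h)
  have hdiff : gfun c f (insert x A) - gfun c f A
      = ∑ B ∈ A.powerset, mcoef c A.card B.card * (f (insert x B) - f B) := by
    unfold gfun
    rw [Finset.sum_powerset_insert hx, Finset.card_insert_of_notMem hx]
    rw [show (((A.card + 1 : ℕ) : ℤ) - 1) = (A.card : ℤ) by push_cast; ring]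
    have h2 : ∑ B ∈ A.powerset, mcoef c (A.card : ℤ) (((insert x B).card : ℤ) - 1) * f (insert x B)
        = ∑ B ∈ A.powerset, mcoef c (A.card : ℤ) (B.card : ℤ) * f (insert x B) := by
      refine Finset.sum_congr rfl fun B hB => ?_
      rw [hcardins B hB]
      norm_num
    rw [h2]
    have h3 : ∑ B ∈ A.powerset, mcoef c (A.card : ℤ) ((B.card : ℤ) - 1) * f B
        - ∑ B ∈ A.powerset, mcoef c ((A.card : ℤ) - 1) ((B.card : ℤ) - 1) * f B
        = ∑ B ∈ A.powerset, (-(mcoef c (A.card : ℤ) (B.card : ℤ))) * f B := by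
      rw [← Finset.sum_sub_distrib]
      refine Finset.sum_congr rfl fun B hB => ?_
      rcases Finset.eq_empty_or_nonempty B with rfl | hBne
      · simp [hnorm]
      · rw [← sub_mul, mrec c A.card B.card (Finset.one_le_card.mpr hBne)
            (Finset.card_le_card (Finset.mem_powerset.mp hB))]
    have : ∑ B ∈ A.powerset, mcoef c (A.card : ℤ) ((B.card : ℤ) - 1) * f B
        + ∑ B ∈ A.powerset, mcoef c (A.card : ℤ) (B.card : ℤ) * f (insert x B)
        - ∑ B ∈ A.powerset, mcoef c ((A.card : ℤ) - 1) ((B.card : ℤ) - 1) * f B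
        = ∑ B ∈ A.powerset, (-(mcoef c (A.card : ℤ) (B.card : ℤ))) * f B
        + ∑ B ∈ A.powerset, mcoef c (A.card : ℤ) (B.card : ℤ) * f (insert x B) := by
      rw [← h3]; ring
    rw [this, ← Finset.sum_add_distrib]
    exact Finset.sum_congr rfl fun B _ => by ring
  rw [hdiff, hgx]
  calc ∑ B ∈ A.powerset, mcoef c A.card B.card * (f (insert x B) - f B)
      ≥ ∑ B ∈ A.powerset, mcoef c A.card B.card * ((1 - c) * f {x}) := by
        refine Finset.sum_le_sum fun B hB => ?_
        refine mul_le_mul_of_nonneg_left ?_ (mcoef_nonneg c hc0 _ _)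
        exact hcurv B x fun h => hx (Finset.mem_powerset.mp hB h)
    _ = (1 - c) * f {x} := by
        rw [← Finset.sum_mul, sum_one c hc0 A, one_mul]
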